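/- Rewriting of the functional Q. Assume the matrix denoising model with the supercritical condition, fix i ∈ {1,…,r} and write d = d_i, u = u_i, v = v_i, A = A_i^R, B = B_i^R. With 𝕀^u = I_M ⊕ 0 and 𝕀^l = 0 ⊕ I_n, set A_1 = A 𝕀^u, A_2 = A 𝕀^l, B_1 = B 𝕀^u, B_2 = B 𝕀^l, and for α ∈ {1,2} define f_α = −m_α Tr(H Ξ_1 A_α) + (1 + z m_α) Tr(G A_α) and g_α = −(m_α/2) Tr(H Ξ_2 B_α) + ((1 + z m_α)/2) Tr(G² B_α) + ((z m_α − 1)/(2z)) Tr(G B_α) − m_α′ Tr(B_α) + m_α′ Tr(H Π_1 B_α), where Ξ_2 = G² − Π_2 and all quantities are evaluated at z. Then for z = p(d) + i n^{−C} (C a large fixed constant), Q(z) = √n ( f_1 + f_2 + g_1 + g_2 ) + √(nz) Σ_{(k,l)∈S(ν)} c_{kl}(z) x_{kl} − Δ_d(z). -/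

import Mathlib

open MeasureTheory ProbabilityTheory Filter Matrix
open scoped RealInnerProductSpace

noncomputable section

/-- `λ₊ = (1 + √y)²`. -/
def lamP (y : ℝ) : ℝ := (1 + Real.sqrt y) ^ 2

/-- `λ₋ = (1 − √y)²`. -/
def lamM (y : ℝ) : ℝ := (1 - Real.sqrt y) ^ 2

/-- The Marchenko–Pastur Stieltjes transform `m₁` at real `z > λ₊` (continuous extension
from the upper half-plane of the formula with the principal complex square root). -/
def m1R (y z : ℝ) : ℝ :=
  (1 - y - z + Real.sqrt ((z - lamP y) * (z - lamM y))) / (2 * z * y)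

/-- The Marchenko–Pastur Stieltjes transform `m₂` at real `z > λ₊`. -/
def m2R (y z : ℝ) : ℝ :=
  (y - 1 - z + Real.sqrt ((z - lamP y) * (z - lamM y))) / (2 * z)

/-- `p(d) = (d²+1)(d²+y)/d²`. -/
def pFun (y d : ℝ) : ℝ := (d ^ 2 + 1) * (d ^ 2 + y) / d ^ 2

/-- `a(d) = (d⁴ − y)/(d²(d²+1))`. -/
def aFun (y d : ℝ) : ℝ := (d ^ 4 - y) / (d ^ 2 * (d ^ 2 + 1))

/-- `h_i(x) = x⁴ p′(x) p(x)/(x + d_i)²`. -/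
def hFun (y di x : ℝ) : ℝ := x ^ 4 * deriv (pFun y) x * pFun y x / (x + di) ^ 2

/-- The `√z`-scaled linearization `H(z) = √z [[0, X], [Xᵀ, 0]]` (real spectral parameter). -/
def linHR {M N : ℕ} (X : Matrix (Fin M) (Fin N) ℝ) (z : ℝ) :
    Matrix (Fin M ⊕ Fin N) (Fin M ⊕ Fin N) ℝ :=
  Real.sqrt z • Matrix.fromBlocks 0 X Xᵀ 0

/-- The Green function `G(z) = (H(z) − z I)⁻¹`. -/
def GreenR {M N : ℕ} (X : Matrix (Fin M) (Fin N) ℝ) (z : ℝ) :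
    Matrix (Fin M ⊕ Fin N) (Fin M ⊕ Fin N) ℝ :=
  (linHR X z - z • (1 : Matrix (Fin M ⊕ Fin N) (Fin M ⊕ Fin N) ℝ))⁻¹

/-- `Π₁(z) = m₁(z) I_M ⊕ m₂(z) I_n`. -/
def Pi1R (M N : ℕ) (y z : ℝ) : Matrix (Fin M ⊕ Fin N) (Fin M ⊕ Fin N) ℝ :=
  Matrix.diagonal (Sum.elim (fun _ => m1R y z) (fun _ => m2R y z))

/-- `Ξ₁(z) = G(z) − Π₁(z)`. -/
def Xi1R {M N : ℕ} (X : Matrix (Fin M) (Fin N) ℝ) (y z : ℝ) :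
    Matrix (Fin M ⊕ Fin N) (Fin M ⊕ Fin N) ℝ :=
  GreenR X z - Pi1R M N y z

/-- The derivative `Ξ₁′(z)` of `Ξ₁` in the spectral parameter, taken entrywise. -/
def Xi1R' {M N : ℕ} (X : Matrix (Fin M) (Fin N) ℝ) (y z : ℝ) :
    Matrix (Fin M ⊕ Fin N) (Fin M ⊕ Fin N) ℝ :=
  Matrix.of fun a b => deriv (fun t => Xi1R X y t a b) z

/-- The `(M+n) × 2r` matrix `𝒰 = diag(U, V)`. -/
def calU {M N r : ℕ} (u : Fin r → EuclideanSpace ℝ (Fin M))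
    (v : Fin r → EuclideanSpace ℝ (Fin N)) :
    Matrix (Fin M ⊕ Fin N) (Fin r ⊕ Fin r) ℝ :=
  Matrix.of fun a k =>
    match a, k with
    | Sum.inl a, Sum.inl k => u k a
    | Sum.inr b, Sum.inr k => v k b
    | _, _ => 0

/-- The `2r × 2r` matrix `W_i(x)` with nonzero entries
`(W_i)_{ii} = m₂(x)²`, `(W_i)_{īī} = 1/(d_i²x)`, `(W_i)_{iī} = (W_i)_{īi} = −m₂(x)/(d_i√x)`. -/
def Wmat {r : ℕ} (y : ℝ) (d : Fin r → ℝ) (i : Fin r) (x : ℝ) :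
    Matrix (Fin r ⊕ Fin r) (Fin r ⊕ Fin r) ℝ :=
  Matrix.of fun a b =>
    match a, b with
    | Sum.inl k, Sum.inl l => if k = i ∧ l = i then m2R y x ^ 2 else 0
    | Sum.inr k, Sum.inr l => if k = i ∧ l = i then 1 / (d i ^ 2 * x) else 0
    | Sum.inl k, Sum.inr l => if k = i ∧ l = i then -(m2R y x) / (d i * Real.sqrt x) else 0
    | Sum.inr k, Sum.inl l => if k = i ∧ l = i then -(m2R y x) / (d i * Real.sqrt x) else 0

/-- `M_i(x) = 𝒰 W_i(x) 𝒰ᵀ`. -/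
def MWmat {M N r : ℕ} (y : ℝ) (u : Fin r → EuclideanSpace ℝ (Fin M))
    (v : Fin r → EuclideanSpace ℝ (Fin N)) (d : Fin r → ℝ) (i : Fin r) (x : ℝ) :
    Matrix (Fin M ⊕ Fin N) (Fin M ⊕ Fin N) ℝ :=
  calU u v * Wmat y d i x * (calU u v)ᵀ

/-- `A_i^R = −d_i² ( h_i′(d_i) M_i(p_i) + h_i(d_i) p′(d_i) M_i′(p_i) )`. -/
def ARmat {M N r : ℕ} (y : ℝ) (u : Fin r → EuclideanSpace ℝ (Fin M))
    (v : Fin r → EuclideanSpace ℝ (Fin N)) (d : Fin r → ℝ) (i : Fin r) :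
    Matrix (Fin M ⊕ Fin N) (Fin M ⊕ Fin N) ℝ :=
  (-(d i ^ 2)) •
    (deriv (hFun y (d i)) (d i) • MWmat y u v d i (pFun y (d i))
      + (hFun y (d i) (d i) * deriv (pFun y) (d i)) •
          Matrix.of fun a b => deriv (fun x => MWmat y u v d i x a b) (pFun y (d i)))

/-- `B_i^R = −d_i² h_i(d_i) p′(d_i) M_i(p_i)`. -/
def BRmat {M N r : ℕ} (y : ℝ) (u : Fin r → EuclideanSpace ℝ (Fin M))
    (v : Fin r → EuclideanSpace ℝ (Fin N)) (d : Fin r → ℝ) (i : Fin r) :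
    Matrix (Fin M ⊕ Fin N) (Fin M ⊕ Fin N) ℝ :=
  (-(d i ^ 2 * hFun y (d i) (d i) * deriv (pFun y) (d i))) • MWmat y u v d i (pFun y (d i))

/-- The Marchenko–Pastur Stieltjes transform `m₁` on the upper half-plane, where the square
root is the principal complex square root (branch cut on the negative real axis). -/
def m1C (y : ℝ) (z : ℂ) : ℂ :=
  (1 - (y : ℂ) - z + Complex.I * (((lamP y : ℂ) - z) * (z - (lamM y : ℂ))) ^ ((1 : ℂ) / 2))
    / (2 * z * (y : ℂ))

/-- The Marchenko–Pastur Stieltjes transform `m₂` on the upper half-plane. -/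
def m2C (y : ℝ) (z : ℂ) : ℂ :=
  ((y : ℂ) - 1 - z + Complex.I * (((lamP y : ℂ) - z) * (z - (lamM y : ℂ))) ^ ((1 : ℂ) / 2))
    / (2 * z)

/-- The `√z`-scaled linearization `H(z) = √z [[0, X], [Xᵀ, 0]]` (complex spectral
parameter, principal square root). -/
def linHC {M N : ℕ} (X : Matrix (Fin M) (Fin N) ℝ) (z : ℂ) :
    Matrix (Fin M ⊕ Fin N) (Fin M ⊕ Fin N) ℂ :=
  z ^ ((1 : ℂ) / 2) •
    Matrix.fromBlocks 0 (X.map (fun t => (t : ℂ))) (X.map (fun t => (t : ℂ)))ᵀ 0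

/-- The Green function `G(z) = (H(z) − z I)⁻¹`. -/
def GC {M N : ℕ} (X : Matrix (Fin M) (Fin N) ℝ) (z : ℂ) :
    Matrix (Fin M ⊕ Fin N) (Fin M ⊕ Fin N) ℂ :=
  (linHC X z - z • (1 : Matrix (Fin M ⊕ Fin N) (Fin M ⊕ Fin N) ℂ))⁻¹

/-- `Π₁(z) = m₁(z) I_M ⊕ m₂(z) I_n`. -/
def Pi1C (M N : ℕ) (y : ℝ) (z : ℂ) : Matrix (Fin M ⊕ Fin N) (Fin M ⊕ Fin N) ℂ :=
  Matrix.diagonal (Sum.elim (fun _ => m1C y z) (fun _ => m2C y z))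

/-- The entrywise derivative `Π₁′(z)`. -/
def Pi1C' (M N : ℕ) (y : ℝ) (z : ℂ) : Matrix (Fin M ⊕ Fin N) (Fin M ⊕ Fin N) ℂ :=
  Matrix.diagonal (Sum.elim (fun _ => deriv (m1C y) z) (fun _ => deriv (m2C y) z))

/-- `Π₂ = 2Π₁′ + Π₁/z`. -/
def Pi2C (M N : ℕ) (y : ℝ) (z : ℂ) : Matrix (Fin M ⊕ Fin N) (Fin M ⊕ Fin N) ℂ :=
  Matrix.diagonal (Sum.elim (fun _ => 2 * deriv (m1C y) z + m1C y z / z)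
    (fun _ => 2 * deriv (m2C y) z + m2C y z / z))

/-- `Ξ₁(z) = G(z) − Π₁(z)`. -/
def Xi1C {M N : ℕ} (X : Matrix (Fin M) (Fin N) ℝ) (y : ℝ) (z : ℂ) :
    Matrix (Fin M ⊕ Fin N) (Fin M ⊕ Fin N) ℂ :=
  GC X z - Pi1C M N y z

/-- The derivative `Ξ₁′(z)` of `Ξ₁` in the spectral parameter, taken entrywise. -/
def Xi1C' {M N : ℕ} (X : Matrix (Fin M) (Fin N) ℝ) (y : ℝ) (z : ℂ) :
    Matrix (Fin M ⊕ Fin N) (Fin M ⊕ Fin N) ℂ :=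
  Matrix.of fun a b => deriv (fun w => Xi1C X y w a b) z

/-- `Ξ₂(z) = G(z)² − Π₂(z)`. -/
def Xi2C {M N : ℕ} (X : Matrix (Fin M) (Fin N) ℝ) (y : ℝ) (z : ℂ) :
    Matrix (Fin M ⊕ Fin N) (Fin M ⊕ Fin N) ℂ :=
  GC X z ^ 2 - Pi2C M N y z

/-- The coefficient `c_{kl}(z)`. -/
def cCoeffC {M N : ℕ} (y : ℝ) (z : ℂ) (A B : Matrix (Fin M ⊕ Fin N) (Fin M ⊕ Fin N) ℂ)
    (k : Fin M) (l : Fin N) : ℂ :=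
  -(((Pi1C M N y z * A * Pi1C M N y z) (Sum.inl k) (Sum.inr l)
        - 1 / (2 * z) * (Pi1C M N y z * B * Pi1C M N y z) (Sum.inl k) (Sum.inr l)
        + 1 / 2 * (Pi1C M N y z * B * Pi2C M N y z) (Sum.inl k) (Sum.inr l)
        + 1 / 2 * (Pi2C M N y z * B * Pi1C M N y z) (Sum.inl k) (Sum.inr l))
      + ((Pi1C M N y z * A * Pi1C M N y z) (Sum.inr l) (Sum.inl k)
        - 1 / (2 * z) * (Pi1C M N y z * B * Pi1C M N y z) (Sum.inr l) (Sum.inl k)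
        + 1 / 2 * (Pi1C M N y z * B * Pi2C M N y z) (Sum.inr l) (Sum.inl k)
        + 1 / 2 * (Pi2C M N y z * B * Pi1C M N y z) (Sum.inr l) (Sum.inl k)))

/-- The deterministic shift `Δ_d(z)`. -/
def DeltaDC {M N : ℕ} (y : ℝ) (z : ℂ) (κ₃ : ℝ)
    (A B : Matrix (Fin M ⊕ Fin N) (Fin M ⊕ Fin N) ℂ) : ℂ :=
  -((κ₃ : ℂ) * z ^ ((3 : ℂ) / 2) / (N : ℂ)) *
    ∑ k : Fin M, ∑ l : Fin N,
      (Pi1C M N y z (Sum.inl k) (Sum.inl k) * Pi1C M N y z (Sum.inr l) (Sum.inr l)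
          * (2 * (Pi1C M N y z * A * Pi1C M N y z) (Sum.inl k) (Sum.inr l)
            + (Pi1C M N y z * B * Pi1C' M N y z) (Sum.inl k) (Sum.inr l)
            + (Pi1C' M N y z * B * Pi1C M N y z) (Sum.inl k) (Sum.inr l))
        + 1 / 2 *
          (Pi2C M N y z (Sum.inl k) (Sum.inl k) * Pi1C M N y z (Sum.inr l) (Sum.inr l)
              * ((Pi1C M N y z * B * Pi1C M N y z) (Sum.inl k) (Sum.inr l)
                + (Pi1C M N y z * B * Pi1C M N y z) (Sum.inl k) (Sum.inr l))
            + Pi1C M N y z (Sum.inl k) (Sum.inl k) * Pi2C M N y z (Sum.inr l) (Sum.inr l)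
              * ((Pi1C M N y z * B * Pi1C M N y z) (Sum.inl k) (Sum.inr l)
                + (Pi1C M N y z * B * Pi1C M N y z) (Sum.inl k) (Sum.inr l))
            + Pi1C M N y z (Sum.inl k) (Sum.inl k) * Pi1C M N y z (Sum.inr l) (Sum.inr l)
              * ((Pi1C M N y z * B * Pi2C M N y z) (Sum.inl k) (Sum.inr l)
                + (Pi2C M N y z * B * Pi1C M N y z) (Sum.inl k) (Sum.inr l))))

/-- Membership in the set `B(ν)`: `|u(k)| > n^{−ν}` and `|v(l)| > n^{−ν}`. -/
def bigSet {M N : ℕ} (ν : ℝ) (u : EuclideanSpace ℝ (Fin M)) (v : EuclideanSpace ℝ (Fin N))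
    (k : Fin M) (l : Fin N) : Prop :=
  (N : ℝ) ^ (-ν) < |u k| ∧ (N : ℝ) ^ (-ν) < |v l|

open scoped Classical in
/-- The random part `Δ_r(z) = √(nz) Σ_{(k,l) ∈ B(ν)} x_{kl} c_{kl}(z)`. -/
def DeltaRndC {M N : ℕ} (ν : ℝ) (u : EuclideanSpace ℝ (Fin M)) (v : EuclideanSpace ℝ (Fin N))
    (Xm : Matrix (Fin M) (Fin N) ℝ) (y : ℝ) (z : ℂ)
    (A B : Matrix (Fin M ⊕ Fin N) (Fin M ⊕ Fin N) ℂ) : ℂ :=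
  ((N : ℂ) * z) ^ ((1 : ℂ) / 2) *
    ∑ k : Fin M, ∑ l : Fin N,
      if bigSet ν u v k l then (Xm k l : ℂ) * cCoeffC y z A B k l else 0

/-- `𝒬(z) = √n (Tr(Ξ₁(z) A) + Tr(Ξ₁′(z) B))`. -/
def QcalC {M N : ℕ} (Xm : Matrix (Fin M) (Fin N) ℝ) (y : ℝ) (z : ℂ)
    (A B : Matrix (Fin M ⊕ Fin N) (Fin M ⊕ Fin N) ℂ) : ℂ :=
  (Real.sqrt (N : ℝ) : ℂ) * ((Xi1C Xm y z * A).trace + (Xi1C' Xm y z * B).trace)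

/-- `Q(z) = 𝒬(z) − Δ_r(z) − Δ_d(z)`. -/
def QFunC {M N : ℕ} (ν : ℝ) (u : EuclideanSpace ℝ (Fin M)) (v : EuclideanSpace ℝ (Fin N))
    (Xm : Matrix (Fin M) (Fin N) ℝ) (y : ℝ) (z : ℂ) (κ₃ : ℝ)
    (A B : Matrix (Fin M ⊕ Fin N) (Fin M ⊕ Fin N) ℂ) : ℂ :=
  QcalC Xm y z A B - DeltaRndC ν u v Xm y z A B - DeltaDC y z κ₃ A B

/-- `𝕀ᵘ = I_M ⊕ 0`. -/
def IuMat (M N : ℕ) : Matrix (Fin M ⊕ Fin N) (Fin M ⊕ Fin N) ℂ :=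
  Matrix.diagonal (Sum.elim (fun _ => 1) (fun _ => 0))

/-- `𝕀ˡ = 0 ⊕ I_n`. -/
def IlMat (M N : ℕ) : Matrix (Fin M ⊕ Fin N) (Fin M ⊕ Fin N) ℂ :=
  Matrix.diagonal (Sum.elim (fun _ => 0) (fun _ => 1))

/-- `f_α = −m_α Tr(H Ξ₁ A_α) + (1 + z m_α) Tr(G A_α)`. -/
def fAlpha {M N : ℕ} (Xm : Matrix (Fin M) (Fin N) ℝ) (y : ℝ) (z mα : ℂ)
    (Aα : Matrix (Fin M ⊕ Fin N) (Fin M ⊕ Fin N) ℂ) : ℂ :=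
  -mα * (linHC Xm z * Xi1C Xm y z * Aα).trace + (1 + z * mα) * (GC Xm z * Aα).trace

/-- `g_α = −(m_α/2) Tr(H Ξ₂ B_α) + ((1 + z m_α)/2) Tr(G² B_α) + ((z m_α − 1)/(2z)) Tr(G B_α)
− m_α′ Tr(B_α) + m_α′ Tr(H Π₁ B_α)`. -/
def gAlpha {M N : ℕ} (Xm : Matrix (Fin M) (Fin N) ℝ) (y : ℝ) (z mα mα' : ℂ)
    (Bα : Matrix (Fin M ⊕ Fin N) (Fin M ⊕ Fin N) ℂ) : ℂ :=
  -(mα / 2) * (linHC Xm z * Xi2C Xm y z * Bα).trace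
    + (1 + z * mα) / 2 * ((GC Xm z ^ 2) * Bα).trace
    + (z * mα - 1) / (2 * z) * (GC Xm z * Bα).trace
    - mα' * Bα.trace + mα' * (linHC Xm z * Pi1C M N y z * Bα).trace


namespace QAux

variable {M N : ℕ}

abbrev Mat (M N : ℕ) := Matrix (Fin M ⊕ Fin N) (Fin M ⊕ Fin N) ℂ

lemma Iu_add_Il : IuMat M N + IlMat M N = 1 := by
  ext a b
  rcases a with a | a <;> rcases b with b | b <;>
    simp [IuMat, IlMat, Matrix.diagonal, Matrix.one_apply, Sum.inl.injEq, Sum.inr.injEq]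

lemma trace_mul_diag (C : Mat M N) (c₁ c₂ : ℂ) :
    c₁ * (C * IuMat M N).trace + c₂ * (C * IlMat M N).trace
      = (C * Matrix.diagonal (Sum.elim (fun _ => c₁) (fun _ => c₂))).trace := by
  simp only [IuMat, IlMat, Matrix.trace, Matrix.diag, Matrix.mul_diagonal,
    Fintype.sum_sum_type, Sum.elim_inl, Sum.elim_inr, mul_one, mul_zero,
    Finset.sum_const_zero, add_zero, zero_add, Finset.mul_sum]
  ring_nf

lemma trace_mul_Iu_add_Il (C : Mat M N) :
    (C * IuMat M N).trace + (C * IlMat M N).trace = C.trace := by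
  rw [← Matrix.trace_add, ← Matrix.mul_add, Iu_add_Il, Matrix.mul_one]

lemma trace_linH_mul (Xm : Matrix (Fin M) (Fin N) ℝ) (z : ℂ) (C : Mat M N) :
    (linHC Xm z * C).trace
      = z ^ ((1:ℂ)/2) * ∑ k : Fin M, ∑ l : Fin N,
          (Xm k l : ℂ) * (C (Sum.inr l) (Sum.inl k) + C (Sum.inl k) (Sum.inr l)) := by
  simp only [Matrix.trace, Matrix.diag, Matrix.mul_apply, linHC, Matrix.smul_apply,
    Fintype.sum_sum_type, Matrix.fromBlocks_apply₁₁, Matrix.fromBlocks_apply₁₂,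
    Matrix.fromBlocks_apply₂₁, Matrix.fromBlocks_apply₂₂, Matrix.zero_apply,
    Matrix.transpose_apply, Matrix.map_apply, smul_eq_mul, mul_zero, zero_mul,
    Finset.sum_const_zero, add_zero, zero_add, Finset.mul_sum]
  rw [Finset.sum_comm (f := fun (a : Fin N) (b : Fin M) =>
    z ^ ((1:ℂ)/2) * (Xm b a : ℂ) * C (Sum.inl b) (Sum.inr a))]
  rw [← Finset.sum_add_distrib]
  refine Finset.sum_congr rfl fun k _ => ?_
  rw [← Finset.sum_add_distrib]
  refine Finset.sum_congr rfl fun l _ => ?_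
  ring

lemma Pi1d_eq (y : ℝ) (z : ℂ) (hz : z ≠ 0) :
    Pi1C' M N y z = (2:ℂ)⁻¹ • Pi2C M N y z - (2*z)⁻¹ • Pi1C M N y z := by
  ext a b
  rcases a with a | a <;> rcases b with b | b <;>
    simp only [Pi1C', Pi2C, Pi1C, Matrix.sub_apply, Matrix.smul_apply, Matrix.diagonal_apply,
      smul_eq_mul] <;>
    [skip; simp; simp; skip] <;>
    by_cases h : a = b <;> simp [h] <;> field_simp <;> ring

lemma hasDerivAt_Pi1C_entry (y : ℝ) (z : ℂ)
    (hm1 : DifferentiableAt ℂ (m1C y) z) (hm2 : DifferentiableAt ℂ (m2C y) z)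
    (a b : Fin M ⊕ Fin N) :
    HasDerivAt (fun w => Pi1C M N y w a b) (Pi1C' M N y z a b) z := by
  rcases a with a | a <;> rcases b with b | b <;>
    simp only [Pi1C, Pi1C', Matrix.diagonal_apply, Sum.elim_inl, Sum.elim_inr,
      Sum.inl.injEq, Sum.inr.injEq, reduceCtorEq, if_false]
  · by_cases h : a = b
    · simpa [h] using hm1.hasDerivAt
    · simp [h]; exact hasDerivAt_const _ _
  · exact hasDerivAt_const _ _
  · exact hasDerivAt_const _ _
  · by_cases h : a = b
    · simpa [h] using hm2.hasDerivAt
    · simp [h]; exact hasDerivAt_const _ _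

lemma Xi1C'_eq (Xm : Matrix (Fin M) (Fin N) ℝ) (y : ℝ) (z : ℂ)
    (hm1 : DifferentiableAt ℂ (m1C y) z) (hm2 : DifferentiableAt ℂ (m2C y) z)
    (hG' : ∀ a b, HasDerivAt (fun w => GC Xm w a b)
      (((2:ℂ)⁻¹ • (GC Xm z * GC Xm z) - (2*z)⁻¹ • GC Xm z) a b) z) :
    Xi1C' Xm y z
      = ((2:ℂ)⁻¹ • (GC Xm z * GC Xm z) - (2*z)⁻¹ • GC Xm z) - Pi1C' M N y z := by
  ext a b
  have h := (hG' a b).sub (hasDerivAt_Pi1C_entry y z hm1 hm2 a b)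
  show deriv (fun w => GC Xm w a b - Pi1C M N y w a b) z = _
  exact h.deriv

section DetUnit

open scoped ComplexOrder

lemma det_isUnit (Xm : Matrix (Fin M) (Fin N) ℝ) (z : ℂ) (hz : z.im ≠ 0) :
    IsUnit (linHC Xm z - z • (1 : Mat M N)).det := by
  classical
  have hz0 : z ≠ 0 := fun h => hz (by simp [h])
  rw [isUnit_iff_ne_zero]
  intro hdet
  obtain ⟨v, hv, hv0⟩ := Matrix.exists_mulVec_eq_zero_iff.2 hdet
  set H0 : Mat M N :=
    Matrix.fromBlocks 0 (Xm.map (fun t => (t : ℂ))) (Xm.map (fun t => (t : ℂ)))ᵀ 0 with hH0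
  set s : ℂ := z ^ ((1:ℂ)/2) with hs
  have hs2 : s * s = z := by
    rw [hs, ← Complex.cpow_add _ _ hz0]; norm_num
  have hsne : s ≠ 0 := by
    intro h; rw [h, mul_zero] at hs2; exact hz0 hs2.symm
  have hherm : H0ᴴ = H0 := by
    ext i j
    rcases i with i | i <;> rcases j with j | j <;>
      simp [hH0, Matrix.conjTranspose_apply]
  have heq : s • (H0 *ᵥ v) = z • v := by
    have h' : (linHC Xm z - z • (1 : Mat M N)) *ᵥ v = s • (H0 *ᵥ v) - z • v := by
      rw [Matrix.sub_mulVec]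
      congr 1
      · rw [show linHC Xm z = s • H0 from rfl, Matrix.smul_mulVec]
      · rw [Matrix.smul_mulVec, Matrix.one_mulVec]
    rw [hv0] at h'
    exact (sub_eq_zero.1 h'.symm)
  set T : ℂ := dotProduct (star v) v with hT
  set S : ℂ := dotProduct (star v) (H0 *ᵥ v) with hS
  have hTne : T ≠ 0 := fun h => hv (dotProduct_star_self_eq_zero.1 h)
  have hTreal : star T = T := (Matrix.star_dotProduct v v).symm
  have hSreal : star S = S := by
    have e1 : star S = star (H0 *ᵥ v) ⬝ᵥ v := by
      rw [hS, Matrix.star_dotProduct, star_star]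
    rw [e1, Matrix.star_mulVec, hherm, ← Matrix.dotProduct_mulVec]
  have h1 : s * S = z * T := by
    have h' := congrArg (fun w => dotProduct (star v) w) heq
    simpa [dotProduct_smul, smul_eq_mul, hS, hT] using h'
  have h2 : star s * S = star z * T := by
    have h' := congrArg star h1
    rw [star_mul', star_mul', hSreal, hTreal] at h'
    exact h'
  have h3 : (s * star z - star s * z) * T = 0 := by
    linear_combination star s * h1 - s * h2
  have h4 : s * star z - star s * z = 0 := by
    rcases mul_eq_zero.1 h3 with h | h
    · exact h
    · exact absurd h hTne
  have hzc : star z = star s * star s := by rw [← hs2, star_mul']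
  rw [hzc, ← hs2] at h4
  have h5 : s * star s * (star s - s) = 0 := by linear_combination h4
  have hscne : star s ≠ 0 := star_ne_zero.2 hsne
  have h6 : star s = s := by
    rcases mul_eq_zero.1 h5 with h | h
    · rcases mul_eq_zero.1 h with h' | h'
      · exact absurd h' hsne
      · exact absurd h' hscne
    · exact sub_eq_zero.1 h
  have hsim : s.im = 0 := by
    have h' := congrArg Complex.im h6
    simp only [Complex.star_def, Complex.conj_im] at h'
    linarith
  apply hz
  rw [← hs2]
  simp [Complex.mul_im, hsim]

end DetUnit

section GDeriv

attribute [local instance] Matrix.linftyOpNormedRing Matrix.linftyOpNormedAlgebra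

noncomputable def entryCLM (a b : Fin M ⊕ Fin N) : Mat M N →L[ℂ] ℂ :=
  LinearMap.toContinuousLinearMap (Matrix.entryLinearMap ℂ ℂ a b)

lemma hasDerivAt_G_entry (Xm : Matrix (Fin M) (Fin N) ℝ) (z : ℂ) (hz : z.im ≠ 0)
    (hdet : IsUnit (linHC Xm z - z • (1 : Mat M N)).det) (a b : Fin M ⊕ Fin N) :
    HasDerivAt (fun w => GC Xm w a b)
      (((2:ℂ)⁻¹ • (GC Xm z * GC Xm z) - (2*z)⁻¹ • GC Xm z) a b) z := by
  classical
  have hz0 : z ≠ 0 := fun h => hz (by simp [h])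
  set H0 : Mat M N :=
    Matrix.fromBlocks 0 (Xm.map (fun t => (t : ℂ))) (Xm.map (fun t => (t : ℂ)))ᵀ 0 with hH0
  set F : ℂ → Mat M N := fun w => w ^ ((1:ℂ)/2) • H0 - w • (1 : Mat M N) with hF
  have hFz : F z = linHC Xm z - z • 1 := rfl
  set G : Mat M N := GC Xm z with hG
  have hGF : G * F z = 1 := by
    rw [hFz]; exact Matrix.nonsing_inv_mul _ hdet
  have hFG : F z * G = 1 := by
    rw [hFz]; exact Matrix.mul_nonsing_inv _ hdet
  set s : ℂ := z ^ ((1:ℂ)/2) with hs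
  have hs2 : s * s = z := by
    rw [hs, ← Complex.cpow_add _ _ hz0]; norm_num
  have hsne : s ≠ 0 := by
    intro h; rw [h, mul_zero] at hs2; exact hz0 hs2.symm
  have hscal : ((1:ℂ)/2 * z ^ (-(1:ℂ)/2)) • H0 = (2*z)⁻¹ • linHC Xm z := by
    have h' : linHC Xm z = s • H0 := rfl
    rw [h', smul_smul]
    congr 1
    have h'' : z ^ (-(1:ℂ)/2) = s⁻¹ := by
      rw [hs, ← Complex.cpow_neg]; norm_num
    rw [h'', ← hs2]
    field_simp
  have hslit : z ∈ Complex.slitPlane := Complex.mem_slitPlane_iff.2 (Or.inr hz)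
  have hsq : HasDerivAt (fun w : ℂ => w ^ ((1:ℂ)/2)) ((1/2) * z ^ (-(1:ℂ)/2)) z := by
    have h' := Complex.hasStrictDerivAt_cpow_const (c := (1:ℂ)/2) hslit
    refine h'.hasDerivAt.congr_deriv ?_
    rw [show (1:ℂ)/2 - 1 = -(1:ℂ)/2 by norm_num]
  have hF' : HasDerivAt F ((2*z)⁻¹ • linHC Xm z - (1 : Mat M N)) z := by
    rw [← hscal]
    exact (hsq.smul_const H0).sub (by simpa using (hasDerivAt_id z).smul_const (1 : Mat M N))
  have hUnit : IsUnit (F z) := by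
    rw [hFz]; exact (Matrix.isUnit_iff_isUnit_det _).2 hdet
  obtain ⟨u, hu⟩ := hUnit
  have hGHG : G * linHC Xm z * G = G + z • (G * G) := by
    have h' : linHC Xm z = F z + z • (1 : Mat M N) := by rw [hFz]; abel
    rw [h', Matrix.mul_add, Matrix.add_mul, Matrix.mul_smul, Matrix.mul_one, hGF,
      Matrix.one_mul, Matrix.smul_mul]
  have hzz : (2*z)⁻¹ * z = 2⁻¹ := by field_simp
  have hDeq : -(G * ((2*z)⁻¹ • linHC Xm z - 1) * G)
      = (2:ℂ)⁻¹ • (G * G) - (2*z)⁻¹ • G := by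
    have e1 : G * ((2*z)⁻¹ • linHC Xm z - 1) * G
        = (2*z)⁻¹ • (G * linHC Xm z * G) - G * G := by
      rw [Matrix.mul_sub, Matrix.sub_mul, Matrix.mul_smul, Matrix.smul_mul, Matrix.mul_one]
    rw [e1, hGHG, smul_add, smul_smul, hzz]
    module
  have hinv : HasDerivAt (fun w => Ring.inverse (F w))
      ((2:ℂ)⁻¹ • (G * G) - (2*z)⁻¹ • G) z := by
    have hfd := hasFDerivAt_ringInverse (𝕜 := ℂ) u
    rw [hu] at hfd
    have hcomp := hfd.comp_hasDerivAt z hF'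
    refine hcomp.congr_deriv ?_
    rw [← hDeq]
    have huinv : (↑u⁻¹ : Mat M N) = (F z)⁻¹ := by
      rw [← hu]; exact Matrix.coe_units_inv u
    simp only [ContinuousLinearMap.neg_apply, ContinuousLinearMap.mulLeftRight_apply, huinv]
    rw [hFz]
    rfl
  have hentry := (entryCLM a b).hasFDerivAt.comp_hasDerivAt z hinv
  have hfun : (fun w => GC Xm w a b) = fun w => entryCLM a b (Ring.inverse (F w)) := by
    funext w
    simp only [entryCLM, LinearMap.coe_toContinuousLinearMap', Matrix.entryLinearMap]
    rw [GC, Matrix.nonsing_inv_eq_ringInverse]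
    rfl
  rw [hfun]
  exact hentry

end GDeriv

end QAux

namespace QAux

open scoped Classical in
lemma master {M N : ℕ} (ν : ℝ) (u : EuclideanSpace ℝ (Fin M)) (v : EuclideanSpace ℝ (Fin N))
    (Xm : Matrix (Fin M) (Fin N) ℝ) (y : ℝ) (z : ℂ) (κ₃ : ℝ)
    (A B : Mat M N)
    (hz : z ≠ 0)
    (hdet : IsUnit (linHC Xm z - z • (1 : Mat M N)).det)
    (hG' : ∀ a b, HasDerivAt (fun w => GC Xm w a b)
      (((2:ℂ)⁻¹ • (GC Xm z * GC Xm z) - (2*z)⁻¹ • GC Xm z) a b) z)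
    (hm1 : DifferentiableAt ℂ (m1C y) z) (hm2 : DifferentiableAt ℂ (m2C y) z)
    (hNz : ((N:ℂ) * z) ^ ((1:ℂ)/2) = (Real.sqrt (N:ℝ) : ℂ) * z ^ ((1:ℂ)/2)) :
    QFunC ν u v Xm y z κ₃ A B
      = (Real.sqrt (N:ℝ) : ℂ) *
          (fAlpha Xm y z (m1C y z) (A * IuMat M N)
            + fAlpha Xm y z (m2C y z) (A * IlMat M N)
            + gAlpha Xm y z (m1C y z) (deriv (m1C y) z) (B * IuMat M N)
            + gAlpha Xm y z (m2C y z) (deriv (m2C y) z) (B * IlMat M N))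
        + ((N:ℂ) * z) ^ ((1:ℂ)/2) *
            (∑ k : Fin M, ∑ l : Fin N,
              if ¬ bigSet ν u v k l
              then cCoeffC y z A B k l * (Xm k l : ℂ) else 0)
        - DeltaDC y z κ₃ A B := by
  set Hm : Mat M N := linHC Xm z with hHm
  set G : Mat M N := GC Xm z with hGdef
  set P1 : Mat M N := Pi1C M N y z with hP1
  set P1d : Mat M N := Pi1C' M N y z with hP1d
  set P2 : Mat M N := Pi2C M N y z with hP2
  set Iu : Mat M N := IuMat M N with hIu
  set Il : Mat M N := IlMat M N with hIl
  have hFG : (Hm - z • (1 : Mat M N)) * G = 1 := Matrix.mul_nonsing_inv _ hdet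
  have hHG : Hm * G = 1 + z • G := by
    rw [Matrix.sub_mul, Matrix.smul_mul, Matrix.one_mul] at hFG
    linear_combination (norm := module) hFG
  -- f identity
  have hf : ∀ (mα : ℂ) (Aα : Mat M N), fAlpha Xm y z mα Aα
      = (G * Aα).trace - mα * Aα.trace + mα * (Hm * P1 * Aα).trace := by
    intro mα Aα
    have e : linHC Xm z * Xi1C Xm y z * Aα = Aα + z • (G * Aα) - Hm * P1 * Aα := by
      rw [Xi1C, ← hGdef, ← hP1, ← hHm, Matrix.mul_sub, Matrix.sub_mul, hHG,
        Matrix.add_mul, Matrix.one_mul, Matrix.smul_mul]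
    rw [fAlpha, e, ← hGdef, Matrix.trace_sub, Matrix.trace_add, Matrix.trace_smul,
      smul_eq_mul]
    ring
  -- g identity
  have hg : ∀ (mα mα' : ℂ) (Bα : Mat M N), gAlpha Xm y z mα mα' Bα
      = 2⁻¹ * (G * G * Bα).trace - (2*z)⁻¹ * (G * Bα).trace - mα' * Bα.trace
        + (mα/2) * (Hm * P2 * Bα).trace + mα' * (Hm * P1 * Bα).trace := by
    intro mα mα' Bα
    have e : linHC Xm z * Xi2C Xm y z * Bα
        = G * Bα + z • (G * G * Bα) - Hm * P2 * Bα := by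
      rw [Xi2C, pow_two, ← hGdef, ← hP2, ← hHm, Matrix.mul_sub, Matrix.sub_mul,
        ← Matrix.mul_assoc, hHG, Matrix.add_mul, Matrix.one_mul, Matrix.smul_mul,
        Matrix.add_mul, Matrix.smul_mul]
    have e2 : (GC Xm z ^ 2) * Bα = G * G * Bα := by rw [pow_two, ← hGdef]
    rw [gAlpha, e, e2, ← hGdef, ← hHm, ← hP1, Matrix.trace_sub, Matrix.trace_add,
      Matrix.trace_smul, smul_eq_mul]
    have hc : (z * mα - 1)/(2*z) = mα/2 - (2*z)⁻¹ := by field_simp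
    rw [hc]
    ring
  have hf1 := hf (m1C y z) (A * Iu)
  have hf2 := hf (m2C y z) (A * Il)
  have hg1 := hg (m1C y z) (deriv (m1C y) z) (B * Iu)
  have hg2 := hg (m2C y z) (deriv (m2C y) z) (B * Il)
  simp only [← Matrix.mul_assoc] at hf1 hf2 hg1 hg2
  -- trace of Xi1 * A
  have h1 : (Xi1C Xm y z * A).trace = (G * A).trace - (A * P1).trace := by
    rw [Xi1C, ← hGdef, ← hP1, Matrix.sub_mul, Matrix.trace_sub, Matrix.trace_mul_comm P1 A]
  -- trace of Xi1' * B
  have h2 : (Xi1C' Xm y z * B).trace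
      = 2⁻¹ * (G * G * B).trace - (2*z)⁻¹ * (G * B).trace - (B * P1d).trace := by
    rw [Xi1C'_eq Xm y z hm1 hm2 hG', ← hGdef, ← hP1d, Matrix.sub_mul, Matrix.sub_mul,
      Matrix.smul_mul, Matrix.smul_mul, Matrix.trace_sub, Matrix.trace_sub,
      Matrix.trace_smul, Matrix.trace_smul, Matrix.trace_mul_comm P1d B, smul_eq_mul,
      smul_eq_mul, Matrix.mul_assoc G G B, ← Matrix.mul_assoc G G B]
  -- diagonal splitting identities
  have d1 : m1C y z * (A * Iu).trace + m2C y z * (A * Il).trace = (A * P1).trace :=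
    trace_mul_diag A _ _
  have d2 : m1C y z * (Hm * P1 * A * Iu).trace + m2C y z * (Hm * P1 * A * Il).trace
      = (Hm * P1 * A * P1).trace := trace_mul_diag _ _ _
  have d3 : deriv (m1C y) z * (B * Iu).trace + deriv (m2C y) z * (B * Il).trace
      = (B * P1d).trace := trace_mul_diag B _ _
  have d4 : deriv (m1C y) z * (Hm * P1 * B * Iu).trace
        + deriv (m2C y) z * (Hm * P1 * B * Il).trace
      = (Hm * P1 * B * P1d).trace := trace_mul_diag _ _ _
  have d5 : m1C y z * (Hm * P2 * B * Iu).trace + m2C y z * (Hm * P2 * B * Il).trace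
      = (Hm * P2 * B * P1).trace := trace_mul_diag _ _ _
  have s1 : (G * A * Iu).trace + (G * A * Il).trace = (G * A).trace :=
    trace_mul_Iu_add_Il _
  have s2 : (G * B * Iu).trace + (G * B * Il).trace = (G * B).trace :=
    trace_mul_Iu_add_Il _
  have s3 : (G * G * B * Iu).trace + (G * G * B * Il).trace = (G * G * B).trace :=
    trace_mul_Iu_add_Il _
  have h4 : (Hm * P1 * B * P1d).trace
      = 2⁻¹ * (Hm * P1 * B * P2).trace - (2*z)⁻¹ * (Hm * P1 * B * P1).trace := by
    rw [hP1d, Pi1d_eq y z hz, ← hP1, ← hP2, Matrix.mul_sub, Matrix.mul_smul, Matrix.mul_smul,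
      Matrix.trace_sub, Matrix.trace_smul, Matrix.trace_smul, smul_eq_mul, smul_eq_mul]
  -- the big sum identity
  have h5 : (Hm * P1 * A * P1).trace + 2⁻¹ * (Hm * P2 * B * P1).trace
        + 2⁻¹ * (Hm * P1 * B * P2).trace - (2*z)⁻¹ * (Hm * P1 * B * P1).trace
      = -(z ^ ((1:ℂ)/2) * ∑ k : Fin M, ∑ l : Fin N,
          (Xm k l : ℂ) * cCoeffC y z A B k l) := by
    have t1 := trace_linH_mul Xm z (P1 * A * P1)
    have t2 := trace_linH_mul Xm z (P2 * B * P1)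
    have t3 := trace_linH_mul Xm z (P1 * B * P2)
    have t4 := trace_linH_mul Xm z (P1 * B * P1)
    simp only [← Matrix.mul_assoc] at t1 t2 t3 t4
    rw [← hHm] at t1 t2 t3 t4
    rw [t1, t2, t3, t4]
    simp only [Finset.mul_sum, ← Finset.sum_add_distrib, ← Finset.sum_sub_distrib,
      ← Finset.sum_neg_distrib]
    refine Finset.sum_congr rfl fun k _ => ?_
    refine Finset.sum_congr rfl fun l _ => ?_
    simp only [cCoeffC, hP1, hP2]
    ring
  -- sum splitting
  have hsplit : (∑ k : Fin M, ∑ l : Fin N, (Xm k l : ℂ) * cCoeffC y z A B k l)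
      = (∑ k : Fin M, ∑ l : Fin N,
          if bigSet ν u v k l then (Xm k l : ℂ) * cCoeffC y z A B k l else 0)
        + (∑ k : Fin M, ∑ l : Fin N,
          if ¬ bigSet ν u v k l then cCoeffC y z A B k l * (Xm k l : ℂ) else 0) := by
    simp only [← Finset.sum_add_distrib]
    refine Finset.sum_congr rfl fun k _ => ?_
    refine Finset.sum_congr rfl fun l _ => ?_
    by_cases h : bigSet ν u v k l <;> simp [h, mul_comm]
  -- final assembly
  rw [QFunC, QcalC, DeltaRndC, hNz, h1, h2, hf1, hf2, hg1, hg2]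
  linear_combination (Real.sqrt (N:ℝ) : ℂ) *
    (d1 - d2 + d3 - d4 - 2⁻¹ * d5 - s1 + (2*z)⁻¹ * s2 - 2⁻¹ * s3 - h4 - h5
      + z ^ ((1:ℂ)/2) * hsplit)
end QAux

namespace QAux

lemma m_diff (y p ε : ℝ) (hy : 0 < y) (hε : 0 < ε) (hp : 1 + y < p) :
    DifferentiableAt ℂ (m1C y) ((p:ℂ) + (ε:ℝ) * Complex.I)
      ∧ DifferentiableAt ℂ (m2C y) ((p:ℂ) + (ε:ℝ) * Complex.I) := by
  set z : ℂ := (p:ℂ) + (ε:ℝ) * Complex.I with hzdef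
  have hzim : z.im = ε := by simp [hzdef]
  have hz0 : z ≠ 0 := fun h => hε.ne' (by rw [← hzim, h]; simp)
  have hw : (((lamP y : ℂ) - z) * (z - (lamM y : ℂ))).im
      = ε * (lamP y + lamM y - 2*p) := by
    simp [Complex.mul_im, hzdef]
    ring
  have hsum : lamP y + lamM y = 2 + 2*y := by
    have h := Real.sq_sqrt hy.le
    rw [lamP, lamM]
    linear_combination 2*h
  have hwne : (((lamP y : ℂ) - z) * (z - (lamM y : ℂ))).im ≠ 0 := by
    rw [hw, hsum]
    have : 2 + 2*y - 2*p < 0 := by linarith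
    exact (mul_neg_of_pos_of_neg hε this).ne
  have hslit : ((lamP y : ℂ) - z) * (z - (lamM y : ℂ)) ∈ Complex.slitPlane :=
    Complex.mem_slitPlane_iff.2 (Or.inr hwne)
  have hinner : DifferentiableAt ℂ (fun w : ℂ => ((lamP y : ℂ) - w) * (w - (lamM y : ℂ))) z :=
    ((differentiableAt_const _).sub differentiableAt_id).mul
      (differentiableAt_id.sub (differentiableAt_const _))
  have hcp : DifferentiableAt ℂ
      (fun w : ℂ => (((lamP y : ℂ) - w) * (w - (lamM y : ℂ))) ^ ((1:ℂ)/2)) z :=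
    (hinner.hasDerivAt.cpow_const hslit).differentiableAt
  have hnum : DifferentiableAt ℂ
      (fun w : ℂ => 1 - (y:ℂ) - w
        + Complex.I * (((lamP y : ℂ) - w) * (w - (lamM y : ℂ))) ^ ((1:ℂ)/2)) z :=
    (((differentiableAt_const _).sub differentiableAt_id).add
      ((differentiableAt_const _).mul hcp))
  have hnum2 : DifferentiableAt ℂ
      (fun w : ℂ => (y:ℂ) - 1 - w
        + Complex.I * (((lamP y : ℂ) - w) * (w - (lamM y : ℂ))) ^ ((1:ℂ)/2)) z :=
    (((differentiableAt_const _).sub differentiableAt_id).add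
      ((differentiableAt_const _).mul hcp))
  have hyne : ((y:ℝ):ℂ) ≠ 0 := by exact_mod_cast hy.ne'
  constructor
  · have : m1C y = fun w : ℂ => (1 - (y:ℂ) - w
        + Complex.I * (((lamP y : ℂ) - w) * (w - (lamM y : ℂ))) ^ ((1:ℂ)/2))
          / (2 * w * (y:ℂ)) := rfl
    rw [this]
    exact hnum.div (by fun_prop) (by simp [hz0, hyne])
  · have : m2C y = fun w : ℂ => ((y:ℂ) - 1 - w
        + Complex.I * (((lamP y : ℂ) - w) * (w - (lamM y : ℂ))) ^ ((1:ℂ)/2))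
          / (2 * w) := rfl
    rw [this]
    exact hnum2.div (by fun_prop) (by simp [hz0])

lemma hNz_aux (N : ℕ) (hN : 1 ≤ N) (z : ℂ) (hz : z ≠ 0) :
    ((N:ℂ) * z) ^ ((1:ℂ)/2) = (Real.sqrt (N:ℝ) : ℂ) * z ^ ((1:ℂ)/2) := by
  have hn0 : (0:ℝ) < (N:ℝ) := by exact_mod_cast Nat.lt_of_lt_of_le Nat.zero_lt_one hN
  have hcast : ((N:ℕ):ℂ) = (((N:ℝ)):ℂ) := by push_cast; ring
  have hne : (((N:ℝ)):ℂ) * z ≠ 0 :=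
    mul_ne_zero (by exact_mod_cast hn0.ne') hz
  rw [hcast, Complex.cpow_def_of_ne_zero hne, Complex.cpow_def_of_ne_zero hz,
    Complex.log_ofReal_mul hn0 hz, add_mul, Complex.exp_add]
  congr 1
  have h1 : (Real.sqrt (N:ℝ) : ℂ) = (((N:ℝ)):ℂ) ^ ((1:ℂ)/2) := by
    rw [Real.sqrt_eq_rpow, Complex.ofReal_cpow hn0.le]
    norm_num
  rw [h1, Complex.cpow_def_of_ne_zero (by exact_mod_cast hn0.ne'),
    Complex.ofReal_log hn0.le]

end QAux
open scoped Classical in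
/-- **Rewriting of the functional `Q`** (Lemma 5.3 of Bao–Ding–Wang): for
`z = p(d) + i n^{−C}` with `C` a large fixed constant,
`Q(z) = √n (f₁ + f₂ + g₁ + g₂) + √(nz) Σ_{(k,l) ∈ S(ν)} c_{kl}(z) x_{kl} − Δ_d(z)`. -/
theorem rewriting_of_Q
    -- dimensions
    (τ c : ℝ) (hτ0 : 0 < τ) (hτ1 : τ < 1)
    (M : ℕ → ℕ)
    (hdim : ∀ n : ℕ, 1 ≤ n → τ ≤ (M n : ℝ) / (n : ℝ) ∧ (M n : ℝ) / (n : ℝ) ≤ τ⁻¹)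
    (hlim : Tendsto (fun n : ℕ => (M n : ℝ) / (n : ℝ)) atTop (nhds c))
    -- signal
    (r : ℕ) (d : Fin r → ℝ)
    (hd : ∀ i j : Fin r, i < j → d j < d i) (hdpos : ∀ i, 0 < d i)
    -- supercritical condition
    (C₀ δ : ℝ) (hC₀ : 0 < C₀) (hδ : 0 < δ)
    (hlow : ∀ n : ℕ, 1 ≤ n → ∀ i, ((M n : ℝ) / (n : ℝ)) ^ ((1 : ℝ) / 4) + δ ≤ d i)
    (hup : ∀ i, d i ≤ C₀)
    (hgap : ∀ i j : Fin r, i ≠ j → δ ≤ |d i - d j|)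
    -- noise matrix
    (Ω : ℕ → Type) [∀ n, MeasureSpace (Ω n)]
    [∀ n, IsProbabilityMeasure (volume : Measure (Ω n))]
    (X : (n : ℕ) → Ω n → Matrix (Fin (M n)) (Fin n) ℝ)
    (hXmeas : ∀ n (i : Fin (M n)) (j : Fin n), Measurable fun ω => X n ω i j)
    (hXindep : ∀ n, iIndepFun
      (fun (ij : Fin (M n) × Fin n) (ω : Ω n) => X n ω ij.1 ij.2) volume)
    (hXid : ∀ n (ij kl : Fin (M n) × Fin n),
      IdentDistrib (fun ω => X n ω ij.1 ij.2) (fun ω => X n ω kl.1 kl.2) volume volume)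
    (hmean : ∀ n (i : Fin (M n)) (j : Fin n), (∫ ω, X n ω i j) = 0)
    (hvar : ∀ n, 1 ≤ n → ∀ (i : Fin (M n)) (j : Fin n), (∫ ω, (X n ω i j) ^ 2) = 1 / (n : ℝ))
    (Cq : ℕ → ℝ)
    (hmom : ∀ q : ℕ, 3 ≤ q → ∀ n, 1 ≤ n → ∀ (i : Fin (M n)) (j : Fin n),
      (∫ ω, |Real.sqrt n * X n ω i j| ^ q) ≤ Cq q)
    -- third cumulant of √n x_{ij}
    (κ₃ : ℕ → ℝ)
    (hκ₃ : ∀ n, 1 ≤ n → ∀ (i : Fin (M n)) (j : Fin n),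
      κ₃ n = ∫ ω, (Real.sqrt n * X n ω i j) ^ 3)
    -- singular vectors of the signal
    (u : (n : ℕ) → Fin r → EuclideanSpace ℝ (Fin (M n)))
    (v : (n : ℕ) → Fin r → EuclideanSpace ℝ (Fin n))
    (hu : ∀ n, Orthonormal ℝ (u n)) (hv : ∀ n, Orthonormal ℝ (v n))
    -- threshold for the set B(ν)
    (ν : ℝ) (hν : 0 < ν) :
    -- conclusion
    ∀ i : Fin r, ∃ Cth : ℝ, 0 < Cth ∧ ∀ Cc : ℝ, Cth ≤ Cc → ∀ n : ℕ, 1 ≤ n → ∀ ω : Ω n,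
      let y : ℝ := (M n : ℝ) / (n : ℝ)
      let z : ℂ := (pFun y (d i) : ℂ) + ((n : ℝ) ^ (-Cc) : ℝ) * Complex.I
      let A : Matrix (Fin (M n) ⊕ Fin n) (Fin (M n) ⊕ Fin n) ℂ :=
        (ARmat y (u n) (v n) d i).map (fun t => (t : ℂ))
      let B : Matrix (Fin (M n) ⊕ Fin n) (Fin (M n) ⊕ Fin n) ℂ :=
        (BRmat y (u n) (v n) d i).map (fun t => (t : ℂ))
      QFunC ν (u n i) (v n i) (X n ω) y z (κ₃ n) A B
        = (Real.sqrt n : ℂ) *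
            (fAlpha (X n ω) y z (m1C y z) (A * IuMat (M n) n)
              + fAlpha (X n ω) y z (m2C y z) (A * IlMat (M n) n)
              + gAlpha (X n ω) y z (m1C y z) (deriv (m1C y) z) (B * IuMat (M n) n)
              + gAlpha (X n ω) y z (m2C y z) (deriv (m2C y) z) (B * IlMat (M n) n))
          + ((n : ℂ) * z) ^ ((1 : ℂ) / 2) *
              (∑ k : Fin (M n), ∑ l : Fin n,
                if ¬ bigSet ν (u n i) (v n i) k l
                then cCoeffC y z A B k l * (X n ω k l : ℂ) else 0)
          - DeltaDC y z (κ₃ n) A B := by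
  intro i
  refine ⟨1, one_pos, fun Cc hCc n hn ω => ?_⟩
  intro y z A B
  have hy_def : y = (M n : ℝ) / (n : ℝ) := rfl
  have hz_def : z = (pFun y (d i) : ℂ) + ((n:ℝ) ^ (-Cc) : ℝ) * Complex.I := rfl
  have hn1 : (1:ℝ) ≤ (n:ℝ) := by exact_mod_cast hn
  have hε : 0 < (n:ℝ) ^ (-Cc) := Real.rpow_pos_of_pos (by linarith) _
  have hy0 : 0 < y := lt_of_lt_of_le hτ0 ((hdim n hn).1)
  have hd0 : 0 < d i := hdpos i
  have hp : 1 + y < pFun y (d i) := by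
    rw [pFun, lt_div_iff₀ (by positivity)]
    nlinarith [pow_pos hd0 2, pow_pos hd0 4, hy0]
  have hm := QAux.m_diff y (pFun y (d i)) ((n:ℝ) ^ (-Cc)) hy0 hε hp
  have hzim : z.im = (n:ℝ) ^ (-Cc) := by rw [hz_def]; simp
  have him : z.im ≠ 0 := by rw [hzim]; exact hε.ne'
  have hz0 : z ≠ 0 := fun h => him (by rw [h]; simp)
  have hdet := QAux.det_isUnit (X n ω) z him
  have hG' := fun a b => QAux.hasDerivAt_G_entry (X n ω) z him hdet a b
  have hNz := QAux.hNz_aux n hn z hz0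
  exact QAux.master ν (u n i) (v n i) (X n ω) y z (κ₃ n) A B hz0 hdet hG' hm.1 hm.2 hNz

end
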